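/- Let X be a real Banach space and U, V, W isometric operators on X satisfying the quaternionic relations as above. Then for every x in X with finite norm, there exists a continuous linear functional x* of norm at most 1 such that x*(x) ≥ (1/2)‖x‖ and x*(Ux) = x*(Vx) = x*(Wx) = 0. -/

import Mathlib

set_option maxHeartbeats 1000000 in
theorem stmt_3 (X : Type*) [NormedAddCommGroup X] [NormedSpace ℝ X] [CompleteSpace X]
    (U V W : X →L[ℝ] X)
    (hUi : ∀ x, ‖U x‖ = ‖x‖) (hVi : ∀ x, ‖V x‖ = ‖x‖) (hWi : ∀ x, ‖W x‖ = ‖x‖)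
    (hU : U ∘L U = -1) (hV : V ∘L V = -1) (hW : W ∘L W = -1)
    (hUV : U ∘L V = W) (hVU : V ∘L U = -W)
    (hVW : V ∘L W = U) (hWV : W ∘L V = -U)
    (hWU : W ∘L U = V) (hUW : U ∘L W = -V)
    (x : X) :
    ∃ f : X →L[ℝ] ℝ, ‖f‖ ≤ 1 ∧ (1 / 2) * ‖x‖ ≤ f x ∧
      f (U x) = 0 ∧ f (V x) = 0 ∧ f (W x) = 0 := by
  -- pointwise versions of the relations
  have hUU : ∀ z, U (U z) = -z := fun z => by
    have := congrFun (congrArg DFunLike.coe hU) z; simpa using this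
  have hVV : ∀ z, V (V z) = -z := fun z => by
    have := congrFun (congrArg DFunLike.coe hV) z; simpa using this
  have hWW : ∀ z, W (W z) = -z := fun z => by
    have := congrFun (congrArg DFunLike.coe hW) z; simpa using this
  have hUVp : ∀ z, U (V z) = W z := fun z => by
    have := congrFun (congrArg DFunLike.coe hUV) z; simpa using this
  have hVUp : ∀ z, V (U z) = -(W z) := fun z => by
    have := congrFun (congrArg DFunLike.coe hVU) z; simpa using this
  have hVWp : ∀ z, V (W z) = U z := fun z => by
    have := congrFun (congrArg DFunLike.coe hVW) z; simpa using this
  have hWVp : ∀ z, W (V z) = -(U z) := fun z => by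
    have := congrFun (congrArg DFunLike.coe hWV) z; simpa using this
  have hWUp : ∀ z, W (U z) = V z := fun z => by
    have := congrFun (congrArg DFunLike.coe hWU) z; simpa using this
  have hUWp : ∀ z, U (W z) = -(V z) := fun z => by
    have := congrFun (congrArg DFunLike.coe hUW) z; simpa using this
  -- key lower bound
  have key : ∀ a b c d : ℝ,
      Real.sqrt (a^2 + b^2 + c^2 + d^2) * ‖x‖ ≤
        2 * ‖a • x + b • U x + c • V x + d • W x‖ := by
    intro a b c d
    set y := a • x + b • U x + c • V x + d • W x with hy
    have hz : a • y - b • U y - c • V y - d • W y = (a^2 + b^2 + c^2 + d^2) • x := by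
      rw [hy]
      simp only [map_add, map_smul, hUU, hVV, hWW, hUVp, hVUp, hVWp, hWVp, hWUp, hUWp]
      module
    have h1 : (a^2 + b^2 + c^2 + d^2) * ‖x‖ ≤ (|a| + |b| + |c| + |d|) * ‖y‖ := by
      calc (a^2 + b^2 + c^2 + d^2) * ‖x‖ = ‖(a^2 + b^2 + c^2 + d^2) • x‖ := by
            rw [norm_smul, Real.norm_eq_abs, abs_of_nonneg (by positivity)]
        _ = ‖a • y - b • U y - c • V y - d • W y‖ := by rw [hz]
        _ ≤ ‖a • y‖ + ‖b • U y‖ + ‖c • V y‖ + ‖d • W y‖ := by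
            calc ‖a • y - b • U y - c • V y - d • W y‖
                ≤ ‖a • y - b • U y - c • V y‖ + ‖d • W y‖ := norm_sub_le _ _
              _ ≤ ‖a • y - b • U y‖ + ‖c • V y‖ + ‖d • W y‖ := by
                  gcongr; exact norm_sub_le _ _
              _ ≤ ‖a • y‖ + ‖b • U y‖ + ‖c • V y‖ + ‖d • W y‖ := by
                  gcongr; exact norm_sub_le _ _
        _ = (|a| + |b| + |c| + |d|) * ‖y‖ := by
            simp [norm_smul, hUi, hVi, hWi, Real.norm_eq_abs]; ring
    set r := Real.sqrt (a^2 + b^2 + c^2 + d^2) with hr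
    have hr0 : 0 ≤ r := Real.sqrt_nonneg _
    have hr2 : r^2 = a^2 + b^2 + c^2 + d^2 := Real.sq_sqrt (by positivity)
    have hs : |a| + |b| + |c| + |d| ≤ 2 * r := by
      nlinarith [sq_nonneg (|a| - |b|), sq_nonneg (|a| - |c|), sq_nonneg (|a| - |d|),
        sq_nonneg (|b| - |c|), sq_nonneg (|b| - |d|), sq_nonneg (|c| - |d|),
        sq_abs a, sq_abs b, sq_abs c, sq_abs d, abs_nonneg a, abs_nonneg b,
        abs_nonneg c, abs_nonneg d, sq_nonneg (|a| + |b| + |c| + |d| - 2 * r)]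
    have h2 : r^2 * ‖x‖ ≤ 2 * r * ‖y‖ := by
      rw [hr2]
      calc (a^2 + b^2 + c^2 + d^2) * ‖x‖ ≤ (|a| + |b| + |c| + |d|) * ‖y‖ := h1
        _ ≤ 2 * r * ‖y‖ := by gcongr
    rcases eq_or_lt_of_le hr0 with h | h
    · rw [← h, zero_mul]; positivity
    · have := le_of_mul_le_mul_left (by nlinarith : r * (r * ‖x‖) ≤ r * (2 * ‖y‖)) h
      linarith
  -- the linear map ψ : ℝ⁴ → X
  obtain ⟨ψ, hψ⟩ : ∃ ψ : (Fin 4 → ℝ) →ₗ[ℝ] X,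
      ∀ q : Fin 4 → ℝ, ψ q = q 0 • x + q 1 • U x + q 2 • V x + q 3 • W x :=
    ⟨{ toFun := fun q => q 0 • x + q 1 • U x + q 2 • V x + q 3 • W x
       map_add' := fun p q => by simp [add_smul]; abel
       map_smul' := fun r q => by simp [smul_smul, smul_add] }, fun q => rfl⟩
  have keyψ : ∀ q : Fin 4 → ℝ, |q 0| * ‖x‖ ≤ 2 * ‖ψ q‖ := by
    intro q
    have h := key (q 0) (q 1) (q 2) (q 3)
    have habs : |q 0| ≤ Real.sqrt ((q 0)^2 + (q 1)^2 + (q 2)^2 + (q 3)^2) := by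
      rw [← Real.sqrt_sq_eq_abs]
      exact Real.sqrt_le_sqrt (by nlinarith [sq_nonneg (q 1), sq_nonneg (q 2), sq_nonneg (q 3)])
    calc |q 0| * ‖x‖ ≤ Real.sqrt ((q 0)^2 + (q 1)^2 + (q 2)^2 + (q 3)^2) * ‖x‖ := by
          gcongr
      _ ≤ 2 * ‖ψ q‖ := by rw [hψ]; exact h
  -- the functional on ℝ⁴
  obtain ⟨c, hc⟩ : ∃ c : (Fin 4 → ℝ) →ₗ[ℝ] ℝ, ∀ q : Fin 4 → ℝ, c q = ‖x‖ / 2 * q 0 :=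
    ⟨(‖x‖ / 2) • LinearMap.proj (0 : Fin 4), fun q => rfl⟩
  have hker : LinearMap.ker ψ ≤ LinearMap.ker c := by
    intro q hq
    rw [LinearMap.mem_ker] at hq ⊢
    have := keyψ q
    rw [hq, norm_zero, mul_zero] at this
    have h0 : |q 0| * ‖x‖ = 0 := le_antisymm this (by positivity)
    rw [hc]
    rcases mul_eq_zero.mp h0 with h | h
    · rw [abs_eq_zero.mp h, mul_zero]
    · rw [h]; ring
  -- the functional on the range of ψ
  let f₀ : LinearMap.range ψ →ₗ[ℝ] ℝ :=
    ((LinearMap.ker ψ).liftQ c hker).comp ψ.quotKerEquivRange.symm.toLinearMap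
  have hf₀ : ∀ (q : Fin 4 → ℝ) (h : ψ q ∈ LinearMap.range ψ), f₀ ⟨ψ q, h⟩ = c q := by
    intro q h
    show ((LinearMap.ker ψ).liftQ c hker) (ψ.quotKerEquivRange.symm ⟨ψ q, h⟩) = c q
    rw [LinearMap.quotKerEquivRange_symm_apply_image]; simp
  have hbound : ∀ z : LinearMap.range ψ, ‖f₀ z‖ ≤ 1 * ‖z‖ := by
    rintro ⟨z, hz⟩
    obtain ⟨q, rfl⟩ := hz
    rw [hf₀ q ⟨q, rfl⟩, hc, one_mul]
    have hn : ‖(⟨ψ q, ⟨q, rfl⟩⟩ : LinearMap.range ψ)‖ = ‖ψ q‖ := rfl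
    rw [hn, Real.norm_eq_abs, abs_mul, abs_of_nonneg (by positivity : (0:ℝ) ≤ ‖x‖ / 2)]
    have := keyψ q
    nlinarith [abs_nonneg (q 0), norm_nonneg x]
  let fc : LinearMap.range ψ →L[ℝ] ℝ := f₀.mkContinuous 1 hbound
  obtain ⟨g, hg, hgn⟩ := exists_extension_norm_eq (LinearMap.range ψ) fc
  have hgn1 : ‖g‖ ≤ 1 := by
    rw [hgn]
    exact LinearMap.mkContinuous_norm_le f₀ zero_le_one hbound
  have eval : ∀ q : Fin 4 → ℝ, g (ψ q) = ‖x‖ / 2 * q 0 := by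
    intro q
    have : g (ψ q) = fc ⟨ψ q, ⟨q, rfl⟩⟩ := hg ⟨ψ q, ⟨q, rfl⟩⟩
    rw [this]
    show f₀ ⟨ψ q, ⟨q, rfl⟩⟩ = _
    rw [hf₀ q ⟨q, rfl⟩, hc]
  refine ⟨g, hgn1, ?_, ?_, ?_, ?_⟩
  · have := eval ![1, 0, 0, 0]
    rw [hψ] at this
    simp at this
    rw [this]; ring_nf; exact le_refl _
  · have := eval ![0, 1, 0, 0]
    rw [hψ] at this
    simp at this
    rw [this]
  · have := eval ![0, 0, 1, 0]
    rw [hψ] at this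
    simp at this
    rw [this]
  · have := eval ![0, 0, 0, 1]
    rw [hψ] at this
    simp at this
    rw [this]
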